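/- As Δ → 0⁺, r_Δ converges uniformly to the cosine function on [0, π/2]: for every ε > 0 there exists δ > 0 such that 0 < Δ < δ implies |r_Δ(t) − cos t| < ε for all t ∈ [0, π/2]. Moreover, the first zero θ_Δ is a continuous function of Δ ∈ [0, ∞). -/

import Mathlib

open MeasureTheory Set Filter

/-- `x` solves the delay equation `x''(t) + p(t)·x(t − τ(t)) = 0` on `I` in the
Carathéodory sense: `x` is differentiable on `I` and on `I` its derivative is an
indefinite integral of `-p(u)·x(u − τ(u))` (so `x` and its derivative are locally
absolutely continuous there, and the equation holds for a.e. `t ∈ I`). -/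
def SolvesDDE (p τ x : ℝ → ℝ) (I : Set ℝ) : Prop :=
  (∀ t ∈ I, HasDerivAt x (deriv x t) t) ∧
  (∀ t₀ ∈ I, ∀ t ∈ I, deriv x t = deriv x t₀ - ∫ u in t₀..t, p u * x (u - τ u))

/-- `r` is the solution `r_Δ` of `r''(t) + r(t − Δ) = 0`, `t ≥ 0`, with `r ≡ 1` on
`(-∞,0]` and `r'(0) = 0` (the derivative is an indefinite integral of `-r(· - Δ)`). -/
def IsDelayCosine (Δ : ℝ) (r : ℝ → ℝ) : Prop :=
  (∀ t ≤ (0:ℝ), r t = 1) ∧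
  (∀ t, 0 ≤ t → HasDerivAt r (deriv r t) t) ∧
  (∀ t, 0 ≤ t → deriv r t = - ∫ u in (0:ℝ)..t, r (u - Δ))

/-- `θ` is the first zero of `r` on `[0,∞)`. -/
def IsFirstZero (r : ℝ → ℝ) (θ : ℝ) : Prop :=
  0 < θ ∧ r θ = 0 ∧ ∀ t, 0 ≤ t → t < θ → 0 < r t

/-- `g(w) = ρ·r(θ − w − Δ)·χ_{[−Δ,0]}(w)`. -/
noncomputable def gAux (ρ Δ θ : ℝ) (r : ℝ → ℝ) : ℝ → ℝ :=
  (Set.Icc (-Δ) (0:ℝ)).indicator fun w => ρ * r (θ - w - Δ)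

/-- The double integral `∫_{-c}^0 (∫_{-c}^s max (β w) (g w) dw) ds`. -/
noncomputable def doubleInt (g β : ℝ → ℝ) (c : ℝ) : ℝ :=
  ∫ s in (-c)..(0:ℝ), ∫ w in (-c)..s, max (β w) (g w)

/-- The recursively defined sequences `β_n`, `ϖ_n` associated with `g`. -/
def IsBetaSeq (g : ℝ → ℝ) (β : ℕ → ℝ → ℝ) (ϖ : ℕ → ℝ) : Prop :=
  (∀ t ≤ (0:ℝ), β 0 t = 1) ∧
  ∀ n : ℕ,
    (0 < ϖ n ∧ doubleInt g (β n) (ϖ n) = 1) ∧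
    (∀ t, t ≤ -ϖ n → β (n+1) t = 1) ∧
    (∀ t, -ϖ n ≤ t → t ≤ 0 →
      β (n+1) t = 1 - ∫ s in (-ϖ n)..t, ∫ w in (-ϖ n)..s, max (β n w) (g w))

/-- `x` has a locally absolutely continuous derivative on `[a,b]`, with a.e. second
derivative `w`. -/
def HasSecondDerivAEOn (x w : ℝ → ℝ) (a b : ℝ) : Prop :=
  (∀ t ∈ Set.Icc a b, HasDerivAt x (deriv x t) t) ∧
  (∀ t ∈ Set.Icc a b, deriv x t = deriv x a + ∫ u in a..t, w u)

open Topology intervalIntegral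

namespace RDAux

lemma abs_cos_sub_cos (x y : ℝ) : |Real.cos x - Real.cos y| ≤ |x - y| := by
  have h1 : |Real.sin ((x + y) / 2)| ≤ 1 := Real.abs_sin_le_one _
  have h2 : |Real.sin ((x - y) / 2)| ≤ |x - y| / 2 := by
    simpa [abs_div] using Real.abs_sin_le_abs (x := (x - y) / 2)
  have h3 : 0 ≤ |Real.sin ((x - y) / 2)| := abs_nonneg _
  rw [Real.cos_sub_cos, abs_mul, abs_mul, abs_neg, abs_two]
  nlinarith [abs_nonneg (Real.sin ((x + y) / 2)), abs_nonneg (x - y)]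

lemma integral_cosh' (a b : ℝ) : ∫ x in a..b, Real.cosh x = Real.sinh b - Real.sinh a :=
  integral_eq_sub_of_hasDerivAt (fun x _ => Real.hasDerivAt_sinh x)
    (Real.continuous_cosh.intervalIntegrable a b)

lemma integral_sinh' (a b : ℝ) : ∫ x in a..b, Real.sinh x = Real.cosh b - Real.cosh a :=
  integral_eq_sub_of_hasDerivAt (fun x _ => Real.hasDerivAt_cosh x)
    (Real.continuous_sinh.intervalIntegrable a b)

lemma int_inner (M C : ℝ) (m : ℕ) (s : ℝ) :
    ∫ u in (0:ℝ)..s, (M * Real.cosh u + C * u ^ m) =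
      M * Real.sinh s + C * s ^ (m + 1) / (m + 1) := by
  rw [integral_add (f := fun u => M * Real.cosh u) (g := fun u => C * u ^ m)
    (((continuous_const.mul Real.continuous_cosh)).intervalIntegrable _ _)
    (((continuous_const.mul (continuous_pow m))).intervalIntegrable _ _),
    intervalIntegral.integral_const_mul, intervalIntegral.integral_const_mul, integral_cosh', integral_pow]
  simp [Real.sinh_zero, mul_div_assoc]

lemma int_outer (M C : ℝ) (k : ℕ) (t : ℝ) :
    ∫ s in (0:ℝ)..t, (M * Real.sinh s + C * s ^ k) =
      M * (Real.cosh t - 1) + C * t ^ (k + 1) / (k + 1) := by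
  rw [integral_add (f := fun u => M * Real.sinh u) (g := fun u => C * u ^ k)
    (((continuous_const.mul Real.continuous_sinh)).intervalIntegrable _ _)
    (((continuous_const.mul (continuous_pow k))).intervalIntegrable _ _),
    intervalIntegral.integral_const_mul, intervalIntegral.integral_const_mul, integral_sinh', integral_pow]
  simp [Real.cosh_zero, mul_div_assoc]


lemma cont {Δ : ℝ} {r : ℝ → ℝ} (h : IsDelayCosine Δ r) : Continuous r := by
  rw [continuous_iff_continuousAt]
  intro x
  rcases le_or_gt 0 x with hx | hx
  · exact (h.2.1 x hx).continuousAt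
  · have hev : ∀ᶠ y in nhds x, (1:ℝ) = r y := by
      filter_upwards [Iio_mem_nhds hx] with y hy using (h.1 y (le_of_lt hy)).symm
    exact continuousAt_const.congr hev

lemma prim_cont (f : ℝ → ℝ) (hf : Continuous f) :
    Continuous fun s => ∫ u in (0:ℝ)..s, f u :=
  intervalIntegral.continuous_primitive (fun a b => hf.intervalIntegrable a b) 0

lemma repr {Δ : ℝ} {r : ℝ → ℝ} (h : IsDelayCosine Δ r) {t : ℝ} (ht : 0 ≤ t) :
    r t = 1 - ∫ s in (0:ℝ)..t, ∫ u in (0:ℝ)..s, r (u - Δ) := by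
  have hc2 : Continuous fun u => r (u - Δ) :=
    (cont h).comp (continuous_id.sub continuous_const)
  have hG : Continuous fun s => ∫ u in (0:ℝ)..s, r (u - Δ) := prim_cont _ hc2
  have hd : ∀ s ∈ Set.uIcc (0:ℝ) t, HasDerivAt r (deriv r s) s := fun s hs => by
    rw [uIcc_of_le ht] at hs; exact h.2.1 s hs.1
  have hi : IntervalIntegrable (deriv r) volume 0 t := by
    apply ContinuousOn.intervalIntegrable
    apply hG.neg.continuousOn.congr
    intro s hs
    rw [uIcc_of_le ht] at hs
    exact h.2.2 s hs.1
  have hftc := intervalIntegral.integral_eq_sub_of_hasDerivAt hd hi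
  have h0 : r 0 = 1 := h.1 0 le_rfl
  have hcg : ∫ s in (0:ℝ)..t, deriv r s
      = - ∫ s in (0:ℝ)..t, ∫ u in (0:ℝ)..s, r (u - Δ) := by
    rw [← intervalIntegral.integral_neg]
    apply intervalIntegral.integral_congr
    intro s hs
    rw [uIcc_of_le ht] at hs
    simpa using h.2.2 s hs.1
  rw [hcg, h0] at hftc
  linarith

lemma abs_double (f : ℝ → ℝ) (hf : Continuous f) {t : ℝ} (ht : 0 ≤ t) :
    |∫ s in (0:ℝ)..t, ∫ u in (0:ℝ)..s, f u| ≤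
      ∫ s in (0:ℝ)..t, ∫ u in (0:ℝ)..s, |f u| := by
  calc |∫ s in (0:ℝ)..t, ∫ u in (0:ℝ)..s, f u|
      ≤ ∫ s in (0:ℝ)..t, |∫ u in (0:ℝ)..s, f u| :=
        intervalIntegral.abs_integral_le_integral_abs ht
    _ ≤ ∫ s in (0:ℝ)..t, ∫ u in (0:ℝ)..s, |f u| := by
        apply intervalIntegral.integral_mono_on ht
          ((prim_cont _ hf).abs.intervalIntegrable _ _)
          ((prim_cont _ hf.abs).intervalIntegrable _ _)
        intro s hs
        exact intervalIntegral.abs_integral_le_integral_abs hs.1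

lemma double_mono (f g : ℝ → ℝ) (hf : Continuous f) (hg : Continuous g) {t : ℝ}
    (ht : 0 ≤ t) (h : ∀ u ∈ Icc (0:ℝ) t, f u ≤ g u) :
    (∫ s in (0:ℝ)..t, ∫ u in (0:ℝ)..s, f u) ≤
      ∫ s in (0:ℝ)..t, ∫ u in (0:ℝ)..s, g u := by
  apply intervalIntegral.integral_mono_on ht
    ((prim_cont _ hf).intervalIntegrable _ _) ((prim_cont _ hg).intervalIntegrable _ _)
  intro s hs
  apply intervalIntegral.integral_mono_on hs.1 (hf.intervalIntegrable _ _)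
    (hg.intervalIntegrable _ _)
  intro u hu
  exact h u ⟨hu.1, hu.2.trans hs.2⟩

lemma double_sub (f g : ℝ → ℝ) (hf : Continuous f) (hg : Continuous g) (t : ℝ) :
    (∫ s in (0:ℝ)..t, ∫ u in (0:ℝ)..s, f u) - (∫ s in (0:ℝ)..t, ∫ u in (0:ℝ)..s, g u)
      = ∫ s in (0:ℝ)..t, ∫ u in (0:ℝ)..s, (f u - g u) := by
  rw [← intervalIntegral.integral_sub ((prim_cont _ hf).intervalIntegrable _ _)
    ((prim_cont _ hg).intervalIntegrable _ _)]
  apply intervalIntegral.integral_congr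
  intro s _
  exact (intervalIntegral.integral_sub (hf.intervalIntegrable _ _)
    (hg.intervalIntegrable _ _)).symm


lemma gronwall (e : ℝ → ℝ) (he : Continuous e) (T a b κ Δ : ℝ)
    (ha : 0 ≤ a) (hb : 0 ≤ b) (hκ : 0 ≤ κ) (hΔ : 0 ≤ Δ) (hT : 0 ≤ T)
    (h0 : ∀ s ∈ Icc (-Δ) (0:ℝ), |e s| ≤ κ)
    (hkey : ∀ t ∈ Icc (0:ℝ) T, |e t| ≤
      a + ∫ s in (0:ℝ)..t, ∫ u in (0:ℝ)..s, (|e (u - Δ)| + b)) :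
    ∀ t ∈ Icc (0:ℝ) T, |e t| ≤ (max a κ + b) * Real.cosh t - b := by
  set M := max a κ + b with hMdef
  have hM0 : 0 ≤ M := add_nonneg (le_trans ha (le_max_left a κ)) hb
  have hMa : a + b ≤ M := by simp [hMdef]
  have hMκ : κ + b ≤ M := by simp [hMdef]
  obtain ⟨x₀, hx₀mem, hx₀⟩ := isCompact_Icc.exists_isMaxOn (nonempty_Icc.2 hT)
    (he.abs.continuousOn (s := Icc 0 T))
  set B := |e x₀| + b with hBdef
  have hB0 : (0:ℝ) ≤ B := add_nonneg (abs_nonneg _) hb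
  have main : ∀ n : ℕ, ∀ t ∈ Icc (0:ℝ) T,
      |e t| ≤ M * Real.cosh t - b + B * t ^ (2 * n) / ((2 * n).factorial : ℝ) := by
    intro n
    induction n with
    | zero =>
      intro t ht
      have h1 : |e t| ≤ |e x₀| := hx₀ ht
      have h2 : 1 ≤ Real.cosh t := Real.one_le_cosh t
      simp only [Nat.mul_zero, pow_zero, Nat.factorial_zero, Nat.cast_one, mul_one]
      nlinarith
    | succ n ih =>
      intro t ht
      set m := 2 * n with hmdef
      set C := B / ((m).factorial : ℝ) with hCdef
      have hC0 : 0 ≤ C := div_nonneg hB0 (Nat.cast_nonneg _)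
      have hfacpos : (0:ℝ) < ((m).factorial : ℝ) := by
        exact_mod_cast Nat.factorial_pos m
      -- majorization
      have maj : ∀ u ∈ Icc (0:ℝ) T, |e (u - Δ)| + b ≤ (M * Real.cosh u + C * u ^ m) := by
        intro u hu
        have hcosh1 : 1 ≤ Real.cosh u := Real.one_le_cosh u
        have hpow0 : 0 ≤ C * u ^ m := mul_nonneg hC0 (pow_nonneg hu.1 m)
        rcases le_or_gt (u - Δ) 0 with h1 | h1
        · have hk := h0 (u - Δ) ⟨by linarith [hu.1], h1⟩
          nlinarith
        · have hm := ih (u - Δ) ⟨h1.le, by linarith [hu.2]⟩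
          have hBC : B * (u - Δ) ^ m / ((m).factorial : ℝ) = C * (u - Δ) ^ m := by
            rw [hCdef]; ring
          rw [hBC] at hm
          have hch : Real.cosh (u - Δ) ≤ Real.cosh u := by
            rw [Real.cosh_le_cosh, abs_of_nonneg h1.le, abs_of_nonneg hu.1]
            linarith
          have hpw : C * (u - Δ) ^ m ≤ C * u ^ m :=
            mul_le_mul_of_nonneg_left (pow_le_pow_left₀ h1.le (by linarith) m) hC0
          nlinarith
      -- chain
      have hfc : Continuous fun u => |e (u - Δ)| + b :=
        ((he.comp (continuous_id.sub continuous_const)).abs).add continuous_const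
      have hgc : Continuous fun u => M * Real.cosh u + C * u ^ m :=
        (continuous_const.mul Real.continuous_cosh).add
          (continuous_const.mul (continuous_pow m))
      have step1 : |e t| ≤ a + ∫ s in (0:ℝ)..t, ∫ u in (0:ℝ)..s,
          (M * Real.cosh u + C * u ^ m) := by
        refine (hkey t ht).trans ?_
        have := double_mono _ _ hfc hgc ht.1
          (fun u hu => maj u ⟨hu.1, hu.2.trans ht.2⟩)
        linarith
      have step2 : ∫ s in (0:ℝ)..t, ∫ u in (0:ℝ)..s, (M * Real.cosh u + C * u ^ m)
          = M * (Real.cosh t - 1) + (C / (m + 1)) * t ^ (m + 2) / (m + 2) := by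
        rw [intervalIntegral.integral_congr
          (g := fun s => M * Real.sinh s + (C / (m+1)) * s ^ (m+1))]
        · rw [int_outer]
          push_cast
          ring
        · intro s _
          show (∫ u in (0:ℝ)..s, (M * Real.cosh u + C * u ^ m))
              = M * Real.sinh s + C / (m + 1) * s ^ (m + 1)
          rw [int_inner]
          ring
      have hf2 : ((m + 2).factorial : ℝ) = (m + 2) * ((m + 1) * ((m).factorial : ℝ)) := by
        rw [Nat.factorial_succ, Nat.factorial_succ]
        push_cast
        ring
      have h2n : 2 * (n + 1) = m + 2 := by omega
      have hcast : C / (m + 1) * t ^ (m + 2) / (m + 2)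
          = B * t ^ (2 * (n + 1)) / ((2 * (n + 1)).factorial : ℝ) := by
        rw [h2n, hf2, hCdef, div_div, div_mul_eq_mul_div, div_div]
        ring
      rw [step2] at step1
      linarith
  intro t ht
  have hseq : Tendsto (fun n : ℕ => B * t ^ (2 * n) / ((2 * n).factorial : ℝ))
      atTop (𝓝 0) := by
    have h1 := FloorSemiring.tendsto_pow_div_factorial_atTop (K := ℝ) t
    have h2 : Tendsto (fun n : ℕ => 2 * n) atTop atTop :=
      Filter.tendsto_atTop_atTop.2 fun c => ⟨c, fun a ha => by omega⟩
    have h3 := (h1.comp h2).const_mul B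
    simpa [Function.comp, mul_div_assoc] using h3
  have hge : ∀ n, |e t| - (M * Real.cosh t - b)
      ≤ B * t ^ (2 * n) / ((2 * n).factorial : ℝ) := fun n => by
    linarith [main n t ht]
  have := ge_of_tendsto' hseq hge
  linarith


lemma shift_cont {Δ : ℝ} {r : ℝ → ℝ} (h : IsDelayCosine Δ r) :
    Continuous fun u => r (u - Δ) :=
  (cont h).comp (continuous_id.sub continuous_const)

lemma rd_bound {Δ : ℝ} {r : ℝ → ℝ} (h : IsDelayCosine Δ r) (hΔ : 0 ≤ Δ)
    {T : ℝ} (hT : 0 ≤ T) : ∀ t ∈ Icc (0:ℝ) T, |r t| ≤ Real.cosh t := by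
  have hkey : ∀ t ∈ Icc (0:ℝ) T, |r t| ≤
      1 + ∫ s in (0:ℝ)..t, ∫ u in (0:ℝ)..s, (|r (u - Δ)| + 0) := by
    intro t ht
    have h1 : |r t| ≤ 1 + |∫ s in (0:ℝ)..t, ∫ u in (0:ℝ)..s, r (u - Δ)| := by
      rw [repr h ht.1]
      calc |1 - ∫ s in (0:ℝ)..t, ∫ u in (0:ℝ)..s, r (u - Δ)|
          ≤ |(1:ℝ)| + |∫ s in (0:ℝ)..t, ∫ u in (0:ℝ)..s, r (u - Δ)| := abs_sub _ _
        _ = 1 + _ := by rw [abs_one]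
    have h2 := abs_double _ (shift_cont h) ht.1
    simp only [add_zero]
    linarith
  have := gronwall r (cont h) T 1 0 1 Δ zero_le_one le_rfl zero_le_one hΔ hT
    (fun s hs => by rw [h.1 s hs.2]; simp) hkey
  intro t ht
  have h2 := this t ht
  simpa using h2

lemma rd_bound' {Δ : ℝ} {r : ℝ → ℝ} (h : IsDelayCosine Δ r) (hΔ : 0 ≤ Δ)
    {T : ℝ} (hT : 0 ≤ T) : ∀ x ≤ T, |r x| ≤ Real.cosh T := by
  intro x hx
  rcases le_or_gt x 0 with h0 | h0
  · rw [h.1 x h0]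
    simpa using Real.one_le_cosh T
  · refine (rd_bound h hΔ hT x ⟨h0.le, hx⟩).trans ?_
    rw [Real.cosh_le_cosh, abs_of_nonneg h0.le, abs_of_nonneg hT]
    exact hx

lemma rd_lip {Δ : ℝ} {r : ℝ → ℝ} (h : IsDelayCosine Δ r) (hΔ : 0 ≤ Δ)
    {T : ℝ} (hT : 0 ≤ T) : ∀ x ≤ T, ∀ y ≤ T,
      |r x - r y| ≤ (T * Real.cosh T) * |x - y| := by
  have hC0 : 0 ≤ T * Real.cosh T := mul_nonneg hT (Real.cosh_pos T).le
  have key : ∀ p ∈ Icc (0:ℝ) T, ∀ q ∈ Icc (0:ℝ) T,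
      |r p - r q| ≤ (T * Real.cosh T) * |p - q| := by
    intro p hp q hq
    have hsub : Set.uIcc q p ⊆ Icc (0:ℝ) T := by
      rw [uIcc_eq_union]
      rintro s (hs | hs)
      · exact ⟨le_trans hq.1 hs.1, le_trans hs.2 hp.2⟩
      · exact ⟨le_trans hp.1 hs.1, le_trans hs.2 hq.2⟩
    have hd : ∀ s ∈ Set.uIcc q p, HasDerivAt r (deriv r s) s := fun s hs =>
      h.2.1 s (hsub hs).1
    have hi : IntervalIntegrable (deriv r) volume q p := by
      apply ContinuousOn.intervalIntegrable
      apply ((prim_cont _ (shift_cont h)).neg.continuousOn).congr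
      intro s hs
      exact h.2.2 s (hsub hs).1
    have hftc := intervalIntegral.integral_eq_sub_of_hasDerivAt hd hi
    have hbd : ‖∫ s in q..p, deriv r s‖ ≤ (T * Real.cosh T) * |p - q| := by
      apply intervalIntegral.norm_integral_le_of_norm_le_const
      intro s hs
      have hs' : s ∈ Icc (0:ℝ) T := by
        rcases hs with ⟨hs1, hs2⟩
        constructor
        · exact le_trans (le_min hq.1 hp.1) hs1.le
        · exact le_trans hs2 (max_le hq.2 hp.2)
      rw [Real.norm_eq_abs, h.2.2 s hs'.1, abs_neg]
      have hin : ‖∫ u in (0:ℝ)..s, r (u - Δ)‖ ≤ Real.cosh T * |s - 0| := by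
        apply intervalIntegral.norm_integral_le_of_norm_le_const
        intro u hu
        have hu' : u ≤ T := by
          rcases hu with ⟨hu1, hu2⟩
          calc u ≤ max 0 s := hu2
            _ ≤ T := max_le hT hs'.2
        rw [Real.norm_eq_abs]
        exact rd_bound' h hΔ hT (u - Δ) (by linarith)
      rw [Real.norm_eq_abs] at hin
      calc |∫ u in (0:ℝ)..s, r (u - Δ)| ≤ Real.cosh T * |s - 0| := hin
        _ ≤ T * Real.cosh T := by
            rw [sub_zero, abs_of_nonneg hs'.1, mul_comm]
            exact mul_le_mul_of_nonneg_right hs'.2 (Real.cosh_pos T).le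
    rw [hftc] at hbd
    simpa [Real.norm_eq_abs] using hbd
  intro x hx y hy
  have hxm : max x 0 ∈ Icc (0:ℝ) T := ⟨le_max_right _ _, max_le hx hT⟩
  have hym : max y 0 ∈ Icc (0:ℝ) T := ⟨le_max_right _ _, max_le hy hT⟩
  have hrx : r x = r (max x 0) := by
    rcases le_total x 0 with h' | h'
    · rw [max_eq_right h', h.1 x h', h.1 0 le_rfl]
    · rw [max_eq_left h']
  have hry : r y = r (max y 0) := by
    rcases le_total y 0 with h' | h'
    · rw [max_eq_right h', h.1 y h', h.1 0 le_rfl]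
    · rw [max_eq_left h']
  calc |r x - r y| = |r (max x 0) - r (max y 0)| := by rw [hrx, hry]
    _ ≤ (T * Real.cosh T) * |max x 0 - max y 0| := key _ hxm _ hym
    _ ≤ (T * Real.cosh T) * |x - y| :=
        mul_le_mul_of_nonneg_left (abs_max_sub_max_le_abs x y 0) hC0

lemma diff_bound {Δ₁ Δ₂ : ℝ} {r₁ r₂ : ℝ → ℝ} (h₁ : IsDelayCosine Δ₁ r₁)
    (h₂ : IsDelayCosine Δ₂ r₂) (hΔ₁ : 0 ≤ Δ₁) (hΔ₂ : 0 ≤ Δ₂)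
    {T : ℝ} (hT : 0 ≤ T) : ∀ t ∈ Icc (0:ℝ) T,
      |r₁ t - r₂ t| ≤ (T * Real.cosh T * Real.cosh T) * |Δ₁ - Δ₂| := by
  set b := (T * Real.cosh T) * |Δ₁ - Δ₂| with hbdef
  have hb0 : 0 ≤ b := mul_nonneg (mul_nonneg hT (Real.cosh_pos T).le) (abs_nonneg _)
  have he : Continuous fun t => r₁ t - r₂ t := (cont h₁).sub (cont h₂)
  have hkey : ∀ t ∈ Icc (0:ℝ) T, |r₁ t - r₂ t| ≤
      0 + ∫ s in (0:ℝ)..t, ∫ u in (0:ℝ)..s, (|r₁ (u - Δ₁) - r₂ (u - Δ₁)| + b) := by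
    intro t ht
    have hid : r₁ t - r₂ t = -(∫ s in (0:ℝ)..t, ∫ u in (0:ℝ)..s,
        (r₁ (u - Δ₁) - r₂ (u - Δ₂))) := by
      rw [← double_sub _ _ (shift_cont h₁) (shift_cont h₂), repr h₁ ht.1, repr h₂ ht.1]
      ring
    have h2 := abs_double (fun u => r₁ (u - Δ₁) - r₂ (u - Δ₂))
      ((shift_cont h₁).sub (shift_cont h₂)) ht.1
    have h3 : (∫ s in (0:ℝ)..t, ∫ u in (0:ℝ)..s, |r₁ (u - Δ₁) - r₂ (u - Δ₂)|) ≤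
        ∫ s in (0:ℝ)..t, ∫ u in (0:ℝ)..s, (|r₁ (u - Δ₁) - r₂ (u - Δ₁)| + b) := by
      apply double_mono (fun u => |r₁ (u - Δ₁) - r₂ (u - Δ₂)|)
        (fun u => |r₁ (u - Δ₁) - r₂ (u - Δ₁)| + b)
        ((shift_cont h₁).sub (shift_cont h₂)).abs
        (((((cont h₁).comp (continuous_id.sub continuous_const)).sub
          ((cont h₂).comp (continuous_id.sub continuous_const))).abs).add continuous_const)
        ht.1
      intro u hu
      have htri : |r₁ (u - Δ₁) - r₂ (u - Δ₂)| ≤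
          |r₁ (u - Δ₁) - r₂ (u - Δ₁)| + |r₂ (u - Δ₁) - r₂ (u - Δ₂)| := by
        have : r₁ (u - Δ₁) - r₂ (u - Δ₂) =
            (r₁ (u - Δ₁) - r₂ (u - Δ₁)) + (r₂ (u - Δ₁) - r₂ (u - Δ₂)) := by ring
        rw [this]
        exact abs_add_le _ _
      have hlip : |r₂ (u - Δ₁) - r₂ (u - Δ₂)| ≤ b := by
        have := rd_lip h₂ hΔ₂ hT (u - Δ₁) (by linarith [hu.2, ht.2])
          (u - Δ₂) (by linarith [hu.2, ht.2])
        have heq : |u - Δ₁ - (u - Δ₂)| = |Δ₁ - Δ₂| := by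
          rw [show u - Δ₁ - (u - Δ₂) = -(Δ₁ - Δ₂) by ring, abs_neg]
        rw [heq] at this
        exact this
      linarith
    rw [hid, abs_neg, zero_add]
    exact h2.trans h3
  have := gronwall (fun t => r₁ t - r₂ t) he T 0 b 0 Δ₁ le_rfl hb0 le_rfl hΔ₁ hT
    (fun s hs => by
      simp only [h₁.1 s hs.2, h₂.1 s hs.2, sub_self, abs_zero, le_refl]) hkey
  intro t ht
  have h2 := this t ht
  simp only [max_self, zero_add] at h2
  have h3 : Real.cosh t ≤ Real.cosh T := by
    rw [Real.cosh_le_cosh, abs_of_nonneg ht.1, abs_of_nonneg hT]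
    exact ht.2
  have h4 : b * Real.cosh t - b ≤ b * Real.cosh T := by
    nlinarith [Real.one_le_cosh t]
  calc |r₁ t - r₂ t| ≤ b * Real.cosh t - b := h2
    _ ≤ b * Real.cosh T := h4
    _ = (T * Real.cosh T * Real.cosh T) * |Δ₁ - Δ₂| := by rw [hbdef]; ring

lemma cos_repr (t : ℝ) :
    Real.cos t = 1 - ∫ s in (0:ℝ)..t, ∫ u in (0:ℝ)..s, Real.cos u := by
  have h1 : ∫ s in (0:ℝ)..t, ∫ u in (0:ℝ)..s, Real.cos u
      = ∫ s in (0:ℝ)..t, Real.sin s := by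
    apply intervalIntegral.integral_congr
    intro s _
    simp [integral_cos]
  rw [h1, integral_sin, Real.cos_zero]
  ring

lemma conv_cos {Δ : ℝ} {r : ℝ → ℝ} (h : IsDelayCosine Δ r) (hΔ : 0 ≤ Δ) :
    ∀ t ∈ Icc (0:ℝ) (Real.pi / 2),
      |r t - Real.cos t| ≤ 2 * Δ * Real.cosh (Real.pi / 2) - Δ := by
  set T := Real.pi / 2 with hTdef
  have hT : 0 ≤ T := by positivity
  have he : Continuous fun t => r t - Real.cos t := (cont h).sub Real.continuous_cos
  have h0 : ∀ s ∈ Icc (-Δ) (0:ℝ), |r s - Real.cos s| ≤ Δ := by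
    intro s hs
    rw [h.1 s hs.2]
    have h1 : |Real.cos 0 - Real.cos s| ≤ |0 - s| := abs_cos_sub_cos 0 s
    rw [Real.cos_zero, zero_sub, abs_neg] at h1
    have h2 : |s| ≤ Δ := abs_le.2 ⟨hs.1, le_trans hs.2 hΔ⟩
    linarith
  have hkey : ∀ t ∈ Icc (0:ℝ) T, |r t - Real.cos t| ≤
      0 + ∫ s in (0:ℝ)..t, ∫ u in (0:ℝ)..s, (|r (u - Δ) - Real.cos (u - Δ)| + Δ) := by
    intro t ht
    have hid : r t - Real.cos t = -(∫ s in (0:ℝ)..t, ∫ u in (0:ℝ)..s,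
        (r (u - Δ) - Real.cos u)) := by
      rw [← double_sub _ _ (shift_cont h) Real.continuous_cos, repr h ht.1, cos_repr t]
      ring
    have h2 := abs_double (fun u => r (u - Δ) - Real.cos u)
      ((shift_cont h).sub Real.continuous_cos) ht.1
    have h3 : (∫ s in (0:ℝ)..t, ∫ u in (0:ℝ)..s, |r (u - Δ) - Real.cos u|) ≤
        ∫ s in (0:ℝ)..t, ∫ u in (0:ℝ)..s, (|r (u - Δ) - Real.cos (u - Δ)| + Δ) := by
      apply double_mono (fun u => |r (u - Δ) - Real.cos u|)
        (fun u => |r (u - Δ) - Real.cos (u - Δ)| + Δ)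
        ((shift_cont h).sub Real.continuous_cos).abs
        (((shift_cont h).sub (Real.continuous_cos.comp
          (continuous_id.sub continuous_const))).abs.add continuous_const) ht.1
      intro u _
      have htri : |r (u - Δ) - Real.cos u| ≤
          |r (u - Δ) - Real.cos (u - Δ)| + |Real.cos (u - Δ) - Real.cos u| := by
        have : r (u - Δ) - Real.cos u =
            (r (u - Δ) - Real.cos (u - Δ)) + (Real.cos (u - Δ) - Real.cos u) := by ring
        rw [this]
        exact abs_add_le _ _
      have hlip : |Real.cos (u - Δ) - Real.cos u| ≤ Δ := by
        have h4 := abs_cos_sub_cos (u - Δ) u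
        have h5 : |u - Δ - u| = Δ := by
          rw [show u - Δ - u = -Δ by ring, abs_neg, abs_of_nonneg hΔ]
        rw [h5] at h4
        exact h4
      linarith
    rw [hid, abs_neg, zero_add]
    exact h2.trans h3
  have := gronwall (fun t => r t - Real.cos t) he T 0 Δ Δ Δ le_rfl hΔ hΔ hΔ hT h0 hkey
  intro t ht
  have h2 := this t ht
  have h3 : Real.cosh t ≤ Real.cosh T := by
    rw [Real.cosh_le_cosh, abs_of_nonneg ht.1, abs_of_nonneg hT]
    exact ht.2
  have h4 : max 0 Δ = Δ := max_eq_right hΔ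
  rw [h4] at h2
  have h5 : (Δ + Δ) * Real.cosh t ≤ 2 * Δ * Real.cosh T := by
    nlinarith [Real.cosh_pos t]
  linarith


end RDAux

/-- `r_Δ → cos` uniformly on `[0, π/2]` as `Δ → 0⁺`, and `Δ ↦ θ_Δ` is
continuous on `[0,∞)`. -/
theorem rDelta_uniform_convergence_theta_continuous
    (r : ℝ → ℝ → ℝ) (θ : ℝ → ℝ)
    (hr : ∀ Δ, 0 ≤ Δ → IsDelayCosine Δ (r Δ))
    (hθ : ∀ Δ, 0 ≤ Δ → IsFirstZero (r Δ) (θ Δ)) :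
    (∀ ε > (0:ℝ), ∃ δ > (0:ℝ), ∀ Δ, 0 < Δ → Δ < δ →
      ∀ t ∈ Set.Icc (0:ℝ) (Real.pi / 2), |r Δ t - Real.cos t| < ε) ∧
    ContinuousOn θ (Set.Ici 0) := by
  constructor
  · intro ε hε
    have hc : 0 < Real.cosh (Real.pi / 2) := Real.cosh_pos _
    refine ⟨ε / (2 * Real.cosh (Real.pi / 2) + 1), by positivity, ?_⟩
    intro Δ hΔ hΔδ t ht
    have h1 := RDAux.conv_cos (hr Δ hΔ.le) hΔ.le t ht
    have h6 : Δ * (2 * Real.cosh (Real.pi / 2) + 1) < ε :=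
      (lt_div_iff₀ (by positivity)).1 hΔδ
    nlinarith
  · intro Δ₀ hΔ₀
    have hΔ₀' : (0:ℝ) ≤ Δ₀ := hΔ₀
    have hRd := hr Δ₀ hΔ₀'
    obtain ⟨hθpos, hθzero, hθfirst⟩ := hθ Δ₀ hΔ₀'
    rw [Metric.continuousWithinAt_iff]
    intro ε hε
    -- negative derivative at the first zero
    have hder : deriv (r Δ₀) (θ Δ₀) < 0 := by
      rw [hRd.2.2 (θ Δ₀) hθpos.le, neg_lt, neg_zero]
      apply intervalIntegral.intervalIntegral_pos_of_pos_on
        ((RDAux.shift_cont hRd).intervalIntegrable _ _)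
      · intro y hy
        rcases le_or_gt (y - Δ₀) 0 with h1 | h1
        · rw [hRd.1 _ h1]; norm_num
        · exact hθfirst (y - Δ₀) h1.le (by linarith [hy.2])
      · exact hθpos
    -- pick x slightly beyond θ Δ₀ where r Δ₀ is negative
    have hslope : Tendsto (slope (r Δ₀) (θ Δ₀)) (𝓝[>] (θ Δ₀)) (𝓝 (deriv (r Δ₀) (θ Δ₀))) :=
      (hasDerivAt_iff_tendsto_slope.1 (hRd.2.1 (θ Δ₀) hθpos.le)).mono_left
        (nhdsWithin_mono (θ Δ₀) (fun y hy => ne_of_gt hy))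
    have hev1 : {y : ℝ | slope (r Δ₀) (θ Δ₀) y < 0} ∈ 𝓝[>] (θ Δ₀) :=
      hslope (Iio_mem_nhds hder)
    have hminpos : 0 < min ε (θ Δ₀) := lt_min hε hθpos
    have hev2 : Ioo (θ Δ₀) (θ Δ₀ + min ε (θ Δ₀)) ∈ 𝓝[>] (θ Δ₀) :=
      Ioo_mem_nhdsGT_of_mem ⟨le_rfl, by linarith⟩
    obtain ⟨x, hx1, hx2⟩ := Filter.nonempty_of_mem (Filter.inter_mem hev1 hev2)
    have hxgt : θ Δ₀ < x := hx2.1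
    have hxlt : x < θ Δ₀ + min ε (θ Δ₀) := hx2.2
    have hminε : min ε (θ Δ₀) ≤ ε := min_le_left _ _
    have hminθ : min ε (θ Δ₀) ≤ θ Δ₀ := min_le_right _ _
    have hRx : r Δ₀ x < 0 := by
      have h1 : slope (r Δ₀) (θ Δ₀) x < 0 := hx1
      rw [slope_def_field, hθzero, sub_zero] at h1
      by_contra hcon
      push_neg at hcon
      have : 0 ≤ r Δ₀ x / (x - θ Δ₀) := div_nonneg hcon (by linarith)
      linarith
    -- minimum of r Δ₀ on [0, 2 θ Δ₀ - x]
    have hyT : 0 ≤ 2 * θ Δ₀ - x := by linarith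
    obtain ⟨z, hz, hzmin⟩ := isCompact_Icc.exists_isMinOn (nonempty_Icc.2 hyT)
      ((RDAux.cont hRd).continuousOn)
    have hm : 0 < r Δ₀ z := hθfirst z hz.1 (by linarith [hz.2])
    have hT0 : (0:ℝ) ≤ x := by linarith
    have hCB0 : (0:ℝ) ≤ x * Real.cosh x * Real.cosh x := by positivity
    have hρ : 0 < min (r Δ₀ z) (-(r Δ₀ x)) := lt_min hm (by linarith)
    set CB := x * Real.cosh x * Real.cosh x with hCBdef
    set ρ := min (r Δ₀ z) (-(r Δ₀ x)) with hρdef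
    refine ⟨ρ / (CB + 1), by positivity, ?_⟩
    intro Δ hΔmem hdist
    have hΔ' : (0:ℝ) ≤ Δ := hΔmem
    have hdiff : ∀ t ∈ Icc (0:ℝ) x, |r Δ t - r Δ₀ t| < ρ := by
      intro t htmem
      have h1 := RDAux.diff_bound (hr Δ hΔ') hRd hΔ' hΔ₀' hT0 t htmem
      have h2 : |Δ - Δ₀| < ρ / (CB + 1) := by rwa [Real.dist_eq] at hdist
      have h3 : CB * |Δ - Δ₀| ≤ CB * (ρ / (CB + 1)) :=
        mul_le_mul_of_nonneg_left h2.le hCB0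
      have h4 : 0 < ρ / (CB + 1) := by positivity
      have h5 : CB * (ρ / (CB + 1)) < ρ := by
        have hid : ρ = (ρ / (CB + 1)) * (CB + 1) := by field_simp
        nlinarith
      calc |r Δ t - r Δ₀ t| ≤ CB * |Δ - Δ₀| := h1
        _ ≤ CB * (ρ / (CB + 1)) := h3
        _ < ρ := h5
    obtain ⟨hpos', hzero', hfirst'⟩ := hθ Δ hΔ'
    have hup : θ Δ ≤ x := by
      by_contra hcon
      push_neg at hcon
      have hgt := hfirst' x hT0 hcon
      have hd := abs_lt.1 (hdiff x ⟨hT0, le_rfl⟩)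
      have hρle : ρ ≤ -(r Δ₀ x) := min_le_right _ _
      linarith [hd.2]
    have hlo : 2 * θ Δ₀ - x < θ Δ := by
      by_contra hcon
      push_neg at hcon
      have h1 : r Δ₀ z ≤ r Δ₀ (θ Δ) := hzmin ⟨hpos'.le, hcon⟩
      have hd := hdiff (θ Δ) ⟨hpos'.le, by linarith⟩
      rw [hzero'] at hd
      have h2 : |r Δ₀ (θ Δ)| < ρ := by
        rw [show (0:ℝ) - r Δ₀ (θ Δ) = -(r Δ₀ (θ Δ)) by ring, abs_neg] at hd
        exact hd
      have hρle : ρ ≤ r Δ₀ z := min_le_left _ _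
      have := abs_lt.1 h2
      linarith [this.2]
    rw [Real.dist_eq]
    have habs : |θ Δ - θ Δ₀| ≤ x - θ Δ₀ := abs_le.2 ⟨by linarith, by linarith⟩
    linarith
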